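/- Let A be a finite dimensional algebra, M a finite dimensional A-bimodule, Λ = A ⋉ M. If Q → P → X → 0 is a minimal projective presentation of a finite dimensional A-module X (i.e., both Q → ker(P → X) and P → X are projective covers), then T(Q) → T(P) → T(X) → 0 is a minimal projective presentation of the Λ-module T(X). -/

import Mathlib

open MulOpposite

/-- `(MN, t)` is the tensor product `M ⊗_R N` of the `R`-bimodule `M` and the left
`R`-module `N`: `t` is bi-additive, `R`-balanced, left-`R`-linear, and universal
among bi-additive `R`-balanced maps out of `M × N`. -/
def IsTensorProd (R : Type) [Ring R] (M : Type) [AddCommGroup M] [Module R M]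
    [Module Rᵐᵒᵖ M] (N : Type) [AddCommGroup N] [Module R N]
    (MN : Type) [AddCommGroup MN] [Module R MN] (t : M → N → MN) : Prop :=
  (∀ m m' n, t (m + m') n = t m n + t m' n) ∧
  (∀ m n n', t m (n + n') = t m n + t m n') ∧
  (∀ (r : R) (m : M) (n : N), t (op r • m) n = t m (r • n)) ∧
  (∀ (r : R) (m : M) (n : N), t (r • m) n = r • t m n) ∧
  (∀ (P : Type) [AddCommGroup P] (g : M → N → P),
    (∀ m m' n, g (m + m') n = g m n + g m' n) →
    (∀ m n n', g m (n + n') = g m n + g m n') →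
    (∀ (r : R) m n, g (op r • m) n = g m (r • n)) →
    ∃! h : MN →+ P, ∀ m n, h (t m n) = g m n)

open TrivSqZeroExt Function LinearMap

section Aux

variable {A M : Type} [Ring A] [AddCommGroup M] [Module A M] [Module Aᵐᵒᵖ M]
  [SMulCommClass A Aᵐᵒᵖ M]
variable {N : Type} [AddCommGroup N] [Module A N]
variable {MN : Type} [AddCommGroup MN] [Module A MN]
variable {t : M → N → MN}

/-- Elements `t m n` generate `MN` as an additive group. -/
theorem IsTensorProd.gen (ht : IsTensorProd A M N MN t) (S : AddSubgroup MN)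
    (hS : ∀ m n, t m n ∈ S) : ∀ u, u ∈ S := by
  obtain ⟨h1, h2, h3, h4, h5⟩ := ht
  obtain ⟨h, -, huniq⟩ := h5 (MN ⧸ S) (fun _ _ => 0) (by simp) (by simp) (by simp)
  have e1 : (QuotientAddGroup.mk' S) = h :=
    huniq _ (fun m n => (QuotientAddGroup.eq_zero_iff _).mpr (hS m n))
  have e2 : (0 : MN →+ MN ⧸ S) = h := huniq _ (fun m n => rfl)
  intro u
  have : QuotientAddGroup.mk' S u = 0 := by rw [e1, ← e2]; rfl
  exact (QuotientAddGroup.eq_zero_iff u).mp this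

/-- Two additive maps out of `MN` agreeing on pure tensors agree. -/
theorem IsTensorProd.addHom_ext (ht : IsTensorProd A M N MN t) {V : Type} [AddCommGroup V]
    {h₁ h₂ : MN →+ V} (h : ∀ m n, h₁ (t m n) = h₂ (t m n)) : ∀ u, h₁ u = h₂ u := by
  intro u
  have := ht.gen (h₁ - h₂).ker (fun m n => by
    simp only [AddMonoidHom.mem_ker, AddMonoidHom.sub_apply, sub_eq_zero]
    exact h m n) u
  simpa [AddMonoidHom.mem_ker, sub_eq_zero] using this

theorem IsTensorProd.t_zero (ht : IsTensorProd A M N MN t) (m : M) : t m 0 = 0 := by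
  have h := ht.2.1 m 0 0
  rw [add_zero] at h
  exact (left_eq_add.mp h)

theorem IsTensorProd.zero_t (ht : IsTensorProd A M N MN t) (n : N) : t 0 n = 0 := by
  have h := ht.1 0 0 n
  rw [add_zero] at h
  exact (left_eq_add.mp h)

variable [instT : Module (TrivSqZeroExt A M) (N × MN)]

theorem IsTensorProd.inl_smul (ht : IsTensorProd A M N MN t)
    (hT : ∀ (q : TrivSqZeroExt A M) (x : N × MN),
      q • x = (q.fst • x.1, q.fst • x.2 + t q.snd x.1))
    (a : A) (w : N × MN) : (inl a : TrivSqZeroExt A M) • w = (a • w.1, a • w.2) := by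
  rw [hT]; simp [ht.zero_t]

theorem IsTensorProd.inr_smul (ht : IsTensorProd A M N MN t)
    (hT : ∀ (q : TrivSqZeroExt A M) (x : N × MN),
      q • x = (q.fst • x.1, q.fst • x.2 + t q.snd x.1))
    (m : M) (w : N × MN) : (inr m : TrivSqZeroExt A M) • w = (0, t m w.1) := by
  rw [hT]; simp

/-- Extension of a semilinear additive map `N →+ V` to a `Λ`-linear map `T(N) →ₗ V`. -/
theorem IsTensorProd.extend (ht : IsTensorProd A M N MN t)
    (hT : ∀ (q : TrivSqZeroExt A M) (x : N × MN),
      q • x = (q.fst • x.1, q.fst • x.2 + t q.snd x.1))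
    {V : Type} [AddCommGroup V] [Module (TrivSqZeroExt A M) V] (ψ : N →+ V)
    (hψ : ∀ (a : A) (x : N), ψ (a • x) = (inl a : TrivSqZeroExt A M) • ψ x) :
    ∃ Ψ : (N × MN) →ₗ[TrivSqZeroExt A M] V, ∀ x : N, Ψ (x, 0) = ψ x := by
  obtain ⟨h, hh, -⟩ := ht.2.2.2.2 V (fun m x => (inr m : TrivSqZeroExt A M) • ψ x)
    (fun m m' x => by
      rw [show (inr (m + m') : TrivSqZeroExt A M) = inr m + inr m' from
        TrivSqZeroExt.ext (by simp) (by simp), add_smul])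
    (fun m x x' => by rw [ψ.map_add, smul_add])
    (fun r m x => by
      rw [hψ, ← mul_smul, show (inr (op r • m) : TrivSqZeroExt A M) = inr m * inl r from
        TrivSqZeroExt.ext (by simp) (by simp)])
  have key1 : ∀ (a : A) (u : MN), h (a • u) = (inl a : TrivSqZeroExt A M) • h u := by
    intro a u
    exact ht.addHom_ext (h₁ := h.comp (DistribMulAction.toAddMonoidHom MN a))
      (h₂ := (DistribMulAction.toAddMonoidHom V (inl a : TrivSqZeroExt A M)).comp h)
      (fun m x => by
        simp only [AddMonoidHom.comp_apply, DistribMulAction.toAddMonoidHom_apply]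
        rw [← ht.2.2.2.1]
        simp only [hh]
        rw [← mul_smul,
          show (inl a : TrivSqZeroExt A M) * inr m = inr (a • m) from
            TrivSqZeroExt.ext (by simp) (by simp)]) u
  have key2 : ∀ (m : M) (u : MN), (inr m : TrivSqZeroExt A M) • h u = 0 := by
    intro m u
    exact ht.addHom_ext
      (h₁ := (DistribMulAction.toAddMonoidHom V (inr m : TrivSqZeroExt A M)).comp h)
      (h₂ := 0)
      (fun m' x => by
        simp only [AddMonoidHom.comp_apply, DistribMulAction.toAddMonoidHom_apply,
          AddMonoidHom.zero_apply]
        simp only [hh]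
        rw [← mul_smul, inr_mul_inr, zero_smul]) u
  refine ⟨{ toFun := fun w => ψ w.1 + h w.2
            map_add' := fun w w' => by
              simp only [Prod.fst_add, Prod.snd_add, ψ.map_add, h.map_add]; abel
            map_smul' := fun q w => ?_ }, fun x => by simp⟩
  simp only [RingHom.id_apply]
  rw [hT]
  simp only [h.map_add, hh, hψ, key1]
  rw [smul_add]
  conv_rhs => rw [← inl_fst_add_inr_snd_eq q]
  rw [add_smul, add_smul, key2, add_zero]
  abel

/-- `T(N)` is a projective `Λ`-module when `N` is a projective `A`-module. -/
theorem IsTensorProd.projectiveT (ht : IsTensorProd A M N MN t)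
    (hT : ∀ (q : TrivSqZeroExt A M) (x : N × MN),
      q • x = (q.fst • x.1, q.fst • x.2 + t q.snd x.1))
    (hproj : Module.Projective A N) :
    Module.Projective (TrivSqZeroExt A M) (N × MN) := by
  classical
  -- the free module and the canonical surjection
  let g : (N →₀ (TrivSqZeroExt A M)) →ₗ[(TrivSqZeroExt A M)] (N × MN) :=
    Finsupp.linearCombination (TrivSqZeroExt A M) (fun x => ((x, 0) : N × MN))
  -- bridging A-action facts
  have b2 : ∀ (a : A) (q : (TrivSqZeroExt A M)), a • q = (inl a : (TrivSqZeroExt A M)) * q := fun a q =>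
    TrivSqZeroExt.ext (by simp) (by simp)
  have b3 : ∀ (a : A) (v : N →₀ (TrivSqZeroExt A M)), a • v = (inl a : (TrivSqZeroExt A M)) • v := fun a v => by
    refine Finsupp.ext fun x => ?_
    rw [Finsupp.smul_apply, Finsupp.smul_apply, b2, smul_eq_mul]
  -- A-linear version of g
  let gA : (N →₀ (TrivSqZeroExt A M)) →ₗ[A] (N × MN) :=
    { toFun := g
      map_add' := g.map_add
      map_smul' := fun a v => by
        simp only [RingHom.id_apply]
        rw [b3, g.map_smul, ht.inl_smul hT]
        rfl }
  have hgx : ∀ x : N, g (Finsupp.single x 1) = (x, 0) := fun x => by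
    simp [g]
  -- g is surjective
  have hsurj0 : ∀ u : MN, ((0 : N), u) ∈ LinearMap.range g := by
    have := ht.gen
      { carrier := {u | ((0 : N), u) ∈ LinearMap.range g}
        add_mem' := fun {u} {u'} hu hu' => by
          obtain ⟨v, hv⟩ := hu; obtain ⟨v', hv'⟩ := hu'
          exact ⟨v + v', by rw [g.map_add, hv, hv']; exact Prod.ext (by simp) (by simp)⟩
        zero_mem' := ⟨0, by rw [map_zero]; rfl⟩
        neg_mem' := fun {u} hu => by
          obtain ⟨v, hv⟩ := hu
          exact ⟨-v, by rw [g.map_neg, hv]; exact Prod.ext (by simp) (by simp)⟩ }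
      (fun m x => by
        refine ⟨(inr m : (TrivSqZeroExt A M)) • Finsupp.single x 1, ?_⟩
        rw [g.map_smul, hgx, ht.inr_smul hT])
    exact this
  have hsurj : Surjective gA := by
    intro w
    obtain ⟨v, hv⟩ := hsurj0 w.2
    obtain ⟨v', hv'⟩ : ∃ v', g v' = (w.1, (0 : MN)) := ⟨Finsupp.single w.1 1, hgx w.1⟩
    exact ⟨v' + v, by show g _ = w; rw [g.map_add, hv, hv']; ext <;> simp⟩
  -- lift the inclusion N → T(N) through gA
  let inlN : N →ₗ[A] (N × MN) :=
    { toFun := fun x => (x, 0)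
      map_add' := fun x y => by ext <;> simp
      map_smul' := fun a x => by ext <;> simp }
  obtain ⟨ψ, hψ⟩ := Module.projective_lifting_property (h := hproj) gA inlN hsurj
  have hψ' : ∀ x : N, g (ψ x) = (x, 0) := fun x => by
    have := congrFun (congrArg DFunLike.coe hψ) x
    exact this
  -- extend ψ to a (TrivSqZeroExt A M)-linear section of g
  obtain ⟨Ψ, hΨ⟩ := ht.extend hT (V := N →₀ (TrivSqZeroExt A M)) ψ.toAddMonoidHom
    (fun a x => by
      simp only [LinearMap.toAddMonoidHom_coe]
      rw [ψ.map_smul, b3])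
  have hsplit : g.comp Ψ = LinearMap.id := by
    have hgen : ∀ u : MN, g (Ψ (0, u)) = ((0 : N), u) := by
      intro u
      exact ht.addHom_ext
        (h₁ := g.toAddMonoidHom.comp (Ψ.toAddMonoidHom.comp (AddMonoidHom.inr N MN)))
        (h₂ := AddMonoidHom.inr N MN)
        (fun m x => by
          simp only [AddMonoidHom.comp_apply, AddMonoidHom.inr_apply,
            LinearMap.toAddMonoidHom_coe]
          rw [show ((0 : N), t m x) = (inr m : (TrivSqZeroExt A M)) • ((x, 0) : N × MN) from
            (ht.inr_smul hT m ((x, (0 : MN)) : N × MN)).symm, Ψ.map_smul, hΨ, g.map_smul,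
            LinearMap.toAddMonoidHom_coe, hψ', ht.inr_smul hT]) u
    refine LinearMap.ext fun w => ?_
    have : w = ((w.1, (0 : MN)) : N × MN) + (0, w.2) := by
      exact Prod.ext (by simp) (by simp)
    rw [LinearMap.comp_apply, LinearMap.id_apply, this, Ψ.map_add, g.map_add, hΨ,
      LinearMap.toAddMonoidHom_coe, hψ', hgen]
  exact Module.Projective.of_split Ψ g hsplit

end Aux

/-- Let `A` be a finite dimensional algebra, `M` a finite
dimensional `A`-bimodule, `Λ = A ⋉ M`. If `Q → P → X → 0` is a minimal projective
presentation of a finite dimensional `A`-module `X` (i.e. `P → X` and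
`Q → ker(P → X)` are projective covers: surjections from projectives with
superfluous kernels), then `T(Q) → T(P) → T(X) → 0` is a minimal projective
presentation of the `Λ`-module `T(X)`. Here `T(N) = N × MN` with
`(r,m) • (n,u) = (r•n, r•u + t m n)` for a realization `(MN, t)` of `M ⊗_A N`,
and `T(g) = g ⊕ (id_M ⊗ g)`. -/
theorem T_minimal_projective_presentation
    (K A M : Type) [Field K] [Ring A] [Algebra K A] [FiniteDimensional K A]
    [AddCommGroup M] [Module A M] [Module Aᵐᵒᵖ M] [SMulCommClass A Aᵐᵒᵖ M]
    [Module K M] [FiniteDimensional K M]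
    (X P Q : Type)
    [AddCommGroup X] [Module A X] [Module K X] [IsScalarTower K A X] [FiniteDimensional K X]
    [AddCommGroup P] [Module A P] [Module K P] [IsScalarTower K A P] [FiniteDimensional K P]
    [AddCommGroup Q] [Module A Q] [Module K Q] [IsScalarTower K A Q] [FiniteDimensional K Q]
    -- realizations of the tensor products M ⊗ X, M ⊗ P, M ⊗ Q
    (MX MP MQ : Type)
    [AddCommGroup MX] [Module A MX] [AddCommGroup MP] [Module A MP]
    [AddCommGroup MQ] [Module A MQ]
    (tX : M → X → MX) (htX : IsTensorProd A M X MX tX)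
    (tP : M → P → MP) (htP : IsTensorProd A M P MP tP)
    (tQ : M → Q → MQ) (htQ : IsTensorProd A M Q MQ tQ)
    -- the trivial extension module structures T(X), T(P), T(Q)
    [instTX : Module (TrivSqZeroExt A M) (X × MX)]
    (hTX : ∀ (q : TrivSqZeroExt A M) (x : X × MX),
      q • x = (q.fst • x.1, q.fst • x.2 + tX q.snd x.1))
    [instTP : Module (TrivSqZeroExt A M) (P × MP)]
    (hTP : ∀ (q : TrivSqZeroExt A M) (x : P × MP),
      q • x = (q.fst • x.1, q.fst • x.2 + tP q.snd x.1))
    [instTQ : Module (TrivSqZeroExt A M) (Q × MQ)]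
    (hTQ : ∀ (q : TrivSqZeroExt A M) (x : Q × MQ),
      q • x = (q.fst • x.1, q.fst • x.2 + tQ q.snd x.1))
    -- a minimal projective presentation Q → P → X → 0 of X
    (f : Q →ₗ[A] P) (p : P →ₗ[A] X)
    (hPproj : Module.Projective A P) (hQproj : Module.Projective A Q)
    (hpsurj : Surjective p)
    (hpmin : ∀ S : Submodule A P, S ⊔ ker p = ⊤ → S = ⊤)
    (hexact : range f = ker p)
    (hfmin : ∀ S : Submodule A Q, S ⊔ ker f = ⊤ → S = ⊤)
    -- the maps T(f) = f ⊕ (id_M ⊗ f) and T(p) = p ⊕ (id_M ⊗ p)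
    (Ff : MQ →+ MP) (hFf : ∀ m q, Ff (tQ m q) = tP m (f q))
    (Fp : MP →+ MX) (hFp : ∀ m x, Fp (tP m x) = tX m (p x))
    (Tf : (Q × MQ) →ₗ[TrivSqZeroExt A M] (P × MP))
    (hTf : ∀ x : Q × MQ, Tf x = (f x.1, Ff x.2))
    (Tp : (P × MP) →ₗ[TrivSqZeroExt A M] (X × MX))
    (hTp : ∀ x : P × MP, Tp x = (p x.1, Fp x.2)) :
    Module.Projective (TrivSqZeroExt A M) (P × MP) ∧
    Module.Projective (TrivSqZeroExt A M) (Q × MQ) ∧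
    Surjective Tp ∧
    (∀ S : Submodule (TrivSqZeroExt A M) (P × MP), S ⊔ ker Tp = ⊤ → S = ⊤) ∧
    range Tf = ker Tp ∧
    (∀ S : Submodule (TrivSqZeroExt A M) (Q × MQ), S ⊔ ker Tf = ⊤ → S = ⊤) := by
  classical
  -- Fp is surjective
  have hFpsurj : Surjective Fp := by
    intro w
    have := htX.gen Fp.range (fun m y => by
      obtain ⟨x, hx⟩ := hpsurj y
      exact ⟨tP m x, by rw [hFp, hx]⟩) w
    exact this
  -- Fp ∘ Ff = 0
  have hFpFf : ∀ u : MQ, Fp (Ff u) = 0 := by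
    intro u
    refine htQ.addHom_ext (h₁ := Fp.comp Ff) (h₂ := 0) (fun m q => ?_) u
    simp only [AddMonoidHom.comp_apply, AddMonoidHom.zero_apply]
    rw [hFf, hFp]
    have : p (f q) = 0 := by
      have : f q ∈ ker p := hexact ▸ LinearMap.mem_range_self f q
      simpa using this
    rw [this, htX.t_zero]
  -- ker Fp ⊆ range Ff
  have hkerFp : ∀ u : MP, Fp u = 0 → u ∈ Ff.range := by
    set D : AddSubgroup MP := Ff.range with hD
    -- well-definedness helper
    have key : ∀ (m : M) (x x' : P), p x = p x' →
        (QuotientAddGroup.mk (tP m x) : MP ⧸ D) = QuotientAddGroup.mk (tP m x') := by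
      intro m x x' hxx
      rw [QuotientAddGroup.eq]
      have hker : x - x' ∈ ker p := by simp [LinearMap.mem_ker, map_sub, hxx]
      obtain ⟨q, hq⟩ := hexact ▸ hker
      refine ⟨tQ m (-q), ?_⟩
      rw [hFf, map_neg, hq, neg_sub]
      have h := htP.2.1 m x (x' - x)
      rw [add_sub_cancel] at h
      rw [h]; abel
    obtain ⟨h, hh, -⟩ := htX.2.2.2.2 (MP ⧸ D)
      (fun m y => QuotientAddGroup.mk (tP m (Classical.choose (hpsurj y))))
      (fun m m' y => by
        rw [htP.1, QuotientAddGroup.mk_add])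
      (fun m y y' => by
        have h1 : p (Classical.choose (hpsurj y) + Classical.choose (hpsurj y')) =
            p (Classical.choose (hpsurj (y + y'))) := by
          rw [map_add, Classical.choose_spec (hpsurj y), Classical.choose_spec (hpsurj y'),
            Classical.choose_spec (hpsurj (y + y'))]
        rw [← key _ _ _ h1, htP.2.1, QuotientAddGroup.mk_add])
      (fun r m y => by
        have h1 : p (r • Classical.choose (hpsurj y)) =
            p (Classical.choose (hpsurj (r • y))) := by
          rw [map_smul, Classical.choose_spec (hpsurj y), Classical.choose_spec (hpsurj (r • y))]
        rw [htP.2.2.1, key _ _ _ h1])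
    have hcomp : ∀ u : MP, h (Fp u) = QuotientAddGroup.mk' D u := by
      intro u
      refine htP.addHom_ext (h₁ := h.comp Fp) (h₂ := QuotientAddGroup.mk' D) (fun m x => ?_) u
      simp only [AddMonoidHom.comp_apply]
      rw [hFp]
      simp only [hh]
      exact key m _ x (Classical.choose_spec (hpsurj (p x)))
    intro u hu
    have : QuotientAddGroup.mk' D u = 0 := by rw [← hcomp, hu, map_zero]
    exact (QuotientAddGroup.eq_zero_iff u).mp this
  refine ⟨htP.projectiveT hTP hPproj, htQ.projectiveT hTQ hQproj, ?_, ?_, ?_, ?_⟩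
  · -- Tp surjective
    rintro ⟨y, w⟩
    obtain ⟨x, hx⟩ := hpsurj y
    obtain ⟨u, hu⟩ := hFpsurj w
    exact ⟨(x, u), by rw [hTp]; simp [hx, hu]⟩
  · -- minimality for Tp
    intro S hS
    -- first component of S
    have hsmulS : ∀ (a : A) (w : P × MP), w ∈ S → ((a • w.1, a • w.2) : P × MP) ∈ S := by
      intro a w hw
      have := S.smul_mem (inl a : TrivSqZeroExt A M) hw
      rwa [htP.inl_smul hTP] at this
    let S1 : Submodule A P :=
      { carrier := {x | ∃ u, ((x, u) : P × MP) ∈ S}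
        add_mem' := fun {x} {y} ⟨u, hu⟩ ⟨v, hv⟩ => ⟨u + v, S.add_mem hu hv⟩
        zero_mem' := ⟨0, S.zero_mem⟩
        smul_mem' := fun a x ⟨u, hu⟩ => ⟨a • u, hsmulS a (x, u) hu⟩ }
    have hS1 : S1 = ⊤ := by
      apply hpmin
      rw [eq_top_iff]
      rintro x -
      have : ((x, (0 : MP)) : P × MP) ∈ S ⊔ ker Tp := hS ▸ Submodule.mem_top
      obtain ⟨s, hs, k, hk, hsk⟩ := Submodule.mem_sup.mp this
      have hk1 : k.1 ∈ ker p := by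
        have : Tp k = 0 := hk
        rw [hTp] at this
        simpa using congrArg Prod.fst this
      refine Submodule.mem_sup.mpr ⟨s.1, ⟨s.2, hs⟩, k.1, hk1, ?_⟩
      exact congrArg Prod.fst hsk
    have hfull : ∀ x : P, ∃ u, ((x, u) : P × MP) ∈ S := by
      intro x
      have : x ∈ S1 := hS1 ▸ Submodule.mem_top
      exact this
    have hMP : ∀ u : MP, (((0 : P), u) : P × MP) ∈ S := by
      refine htP.gen
        { carrier := {u | (((0 : P), u) : P × MP) ∈ S}
          add_mem' := fun {u} {v} hu hv => by
            have := S.add_mem hu hv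
            simpa using this
          zero_mem' := by exact S.zero_mem
          neg_mem' := fun {u} hu => by
            have := S.neg_mem hu
            simpa using this }
        (fun m x => by
          obtain ⟨u, hu⟩ := hfull x
          have := S.smul_mem (inr m : TrivSqZeroExt A M) hu
          rwa [htP.inr_smul hTP] at this)
    rw [eq_top_iff]
    rintro ⟨x, u⟩ -
    obtain ⟨u', hu'⟩ := hfull x
    have : ((x, u) : P × MP) = (x, u') + (0, u - u') := by ext <;> simp
    rw [this]
    exact S.add_mem hu' (hMP (u - u'))
  · -- exactness
    ext w
    constructor
    · rintro ⟨v, rfl⟩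
      rw [LinearMap.mem_ker, hTp, hTf]
      have h1 : p (f v.1) = 0 := by
        have : f v.1 ∈ ker p := hexact ▸ LinearMap.mem_range_self f v.1
        simpa using this
      simp [h1, hFpFf]
    · intro hw
      rw [LinearMap.mem_ker, hTp] at hw
      rw [Prod.ext_iff] at hw
      obtain ⟨h1, h2⟩ := hw
      have hx : w.1 ∈ range f := hexact.symm ▸ (LinearMap.mem_ker.mpr h1)
      obtain ⟨q, hq⟩ := hx
      obtain ⟨v, hv⟩ := hkerFp w.2 h2
      exact ⟨(q, v), by rw [hTf]; ext <;> simp [hq, hv]⟩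
  · -- minimality for Tf
    intro S hS
    have hsmulS : ∀ (a : A) (w : Q × MQ), w ∈ S → ((a • w.1, a • w.2) : Q × MQ) ∈ S := by
      intro a w hw
      have := S.smul_mem (inl a : TrivSqZeroExt A M) hw
      rwa [htQ.inl_smul hTQ] at this
    let S1 : Submodule A Q :=
      { carrier := {x | ∃ u, ((x, u) : Q × MQ) ∈ S}
        add_mem' := fun {x} {y} ⟨u, hu⟩ ⟨v, hv⟩ => ⟨u + v, S.add_mem hu hv⟩
        zero_mem' := ⟨0, S.zero_mem⟩
        smul_mem' := fun a x ⟨u, hu⟩ => ⟨a • u, hsmulS a (x, u) hu⟩ }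
    have hS1 : S1 = ⊤ := by
      apply hfmin
      rw [eq_top_iff]
      rintro x -
      have : ((x, (0 : MQ)) : Q × MQ) ∈ S ⊔ ker Tf := hS ▸ Submodule.mem_top
      obtain ⟨s, hs, k, hk, hsk⟩ := Submodule.mem_sup.mp this
      have hk1 : k.1 ∈ ker f := by
        have : Tf k = 0 := hk
        rw [hTf] at this
        simpa using congrArg Prod.fst this
      refine Submodule.mem_sup.mpr ⟨s.1, ⟨s.2, hs⟩, k.1, hk1, ?_⟩
      exact congrArg Prod.fst hsk
    have hfull : ∀ x : Q, ∃ u, ((x, u) : Q × MQ) ∈ S := by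
      intro x
      have : x ∈ S1 := hS1 ▸ Submodule.mem_top
      exact this
    have hMQ : ∀ u : MQ, (((0 : Q), u) : Q × MQ) ∈ S := by
      refine htQ.gen
        { carrier := {u | (((0 : Q), u) : Q × MQ) ∈ S}
          add_mem' := fun {u} {v} hu hv => by
            have := S.add_mem hu hv
            simpa using this
          zero_mem' := by exact S.zero_mem
          neg_mem' := fun {u} hu => by
            have := S.neg_mem hu
            simpa using this }
        (fun m x => by
          obtain ⟨u, hu⟩ := hfull x
          have := S.smul_mem (inr m : TrivSqZeroExt A M) hu
          rwa [htQ.inr_smul hTQ] at this)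
    rw [eq_top_iff]
    rintro ⟨x, u⟩ -
    obtain ⟨u', hu'⟩ := hfull x
    have : ((x, u) : Q × MQ) = (x, u') + (0, u - u') := by ext <;> simp
    rw [this]
    exact S.add_mem hu' (hMQ (u - u'))
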